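/- For every natural number p, every real λ, and every real y with |λy| < 1, one has Σ_{n=0}^∞ (n)_p T_n(y) = (y^{p+1}/(p+1)) (1)_{p+1,λ} (1+λy)^{−(p+1)} e_λ(y), where (n)_p = n(n−1)⋯(n−p+1) is the ordinary falling factorial (with (n)_0 = 1) and the series on the left converges. -/

import Mathlib

noncomputable section

/-- Generalized falling factorial `(x)_{n,λ} = x(x-λ)⋯(x-(n-1)λ)`, with `(x)_{0,λ} = 1`. -/
def dff (lam x : ℝ) (n : ℕ) : ℝ := ∏ i ∈ Finset.range n, (x - i * lam)

/-- Degenerate exponential `e_λ(y) = ∑_{n=0}^∞ (1)_{n,λ} y^n / n!`. -/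
def dexp (lam y : ℝ) : ℝ := ∑' n : ℕ, dff lam 1 n * y ^ n / n.factorial

/-- Truncated degenerate exponential tail
`T_n(y) = e_λ(y) - ∑_{k=0}^n (1)_{k,λ} y^k / k!`. -/
def dtail (lam y : ℝ) (n : ℕ) : ℝ :=
  dexp lam y - ∑ k ∈ Finset.range (n + 1), dff lam 1 k * y ^ k / k.factorial

lemma dff_succ (lam x : ℝ) (n : ℕ) : dff lam x (n + 1) = dff lam x n * (x - n * lam) :=
  Finset.prod_range_succ _ _

lemma dff_add (lam x : ℝ) (n k : ℕ) :
    dff lam x (n + k) = dff lam x n * dff lam (x - n * lam) k := by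
  unfold dff
  rw [Finset.prod_range_add]
  congr 1
  refine Finset.prod_congr rfl fun i _ => ?_
  push_cast
  ring

lemma descFact_mul_fact (j m : ℕ) :
    (j + m).descFactorial m * j.factorial = (j + m).factorial := by
  induction m with
  | zero => simp
  | succ m ih =>
    rw [show j + (m + 1) = (j + m) + 1 from rfl, Nat.succ_descFactorial_succ,
      Nat.factorial_succ, mul_assoc, ih]

lemma hockey (p m : ℕ) :
    (∑ n ∈ Finset.range m, n.descFactorial p) * (p + 1) = m.descFactorial (p + 1) := by
  induction m with
  | zero => simp
  | succ m ih =>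
    rw [Finset.sum_range_succ, add_mul, ih, Nat.succ_descFactorial_succ,
      Nat.descFactorial_succ]
    rcases le_or_gt p m with h | h
    · have : m - p + (p + 1) = m + 1 := by omega
      calc (m - p) * m.descFactorial p + m.descFactorial p * (p + 1)
          = (m - p + (p + 1)) * m.descFactorial p := by ring
        _ = (m + 1) * m.descFactorial p := by rw [this]
    · simp [Nat.descFactorial_eq_zero_iff_lt.mpr h]

lemma sumAux (lam x y : ℝ) (hy : |lam * y| < 1) (q : ℕ) :
    Summable (fun k : ℕ => dff lam x (k + q) * y ^ (k + q) / (k.factorial : ℝ)) := by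
  set f : ℕ → ℝ := fun k => dff lam x (k + q) * y ^ (k + q) / (k.factorial : ℝ) with hf
  set r : ℝ := (1 + |lam * y|) / 2 with hrdef
  have h0 : 0 ≤ |lam * y| := abs_nonneg _
  have hlt : |lam * y| < r := by rw [hrdef]; linarith
  have hr1 : r < 1 := by rw [hrdef]; linarith
  apply summable_of_ratio_norm_eventually_le hr1
  have key : ∀ k : ℕ, f (k + 1) = f k * ((x - (k + q) * lam) * y / (k + 1)) := by
    intro k
    have h1 : dff lam x (k + 1 + q) = dff lam x (k + q) * (x - (k + q : ℕ) * lam) := by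
      rw [show k + 1 + q = (k + q) + 1 from by ring, dff_succ]
    have h2 : y ^ (k + 1 + q) = y ^ (k + q) * y := by
      rw [show k + 1 + q = (k + q) + 1 from by ring, pow_succ]
    have hk0 : ((k.factorial : ℝ)) ≠ 0 := by exact_mod_cast k.factorial_ne_zero
    have hk1 : ((k : ℝ) + 1) ≠ 0 := by positivity
    rw [hf]
    simp only
    rw [h1, h2, Nat.factorial_succ]
    push_cast
    field_simp
  set C : ℝ := |x * y| + q * |lam * y| with hC
  have hCnn : 0 ≤ C := by positivity
  filter_upwards [Filter.eventually_ge_atTop ⌈C / (r - |lam * y|)⌉₊] with k hk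
  have hkC : C / (r - |lam * y|) ≤ (k : ℝ) := le_trans (Nat.le_ceil _) (by exact_mod_cast hk)
  have hkC' : C ≤ (k : ℝ) * (r - |lam * y|) := by
    rw [div_le_iff₀ (by linarith)] at hkC
    linarith [hkC]
  rw [key k, norm_mul]
  have hbound : ‖(x - ((k : ℝ) + (q : ℝ)) * lam) * y / ((k : ℝ) + 1)‖ ≤ r := by
    rw [Real.norm_eq_abs, abs_div, abs_of_pos (by positivity : (0:ℝ) < (k:ℝ) + 1),
      div_le_iff₀ (by positivity : (0:ℝ) < (k:ℝ) + 1)]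
    have hsplit : (x - ((k : ℝ) + (q : ℝ)) * lam) * y
        = x * y - ((k : ℝ) + q) * (lam * y) := by ring
    have hstep : |(x - ((k : ℝ) + (q : ℝ)) * lam) * y|
        ≤ |x * y| + ((k : ℝ) + q) * |lam * y| := by
      rw [hsplit]
      refine (abs_sub _ _).trans ?_
      rw [abs_mul ((k : ℝ) + (q : ℝ)) (lam * y),
        abs_of_nonneg (by positivity : (0:ℝ) ≤ (k : ℝ) + q)]
    have h0r : 0 < r := by rw [hrdef]; linarith
    calc |(x - ((k : ℝ) + (q : ℝ)) * lam) * y| ≤ |x * y| + ((k : ℝ) + q) * |lam * y| := hstep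
      _ = C + (k : ℝ) * |lam * y| := by rw [hC]; ring
      _ ≤ (k : ℝ) * r := by nlinarith
      _ ≤ r * ((k : ℝ) + 1) := by nlinarith
  calc ‖f k‖ * ‖(x - ((k : ℝ) + (q : ℝ)) * lam) * y / ((k : ℝ) + 1)‖ ≤ ‖f k‖ * r :=
        mul_le_mul_of_nonneg_left hbound (norm_nonneg _)
    _ = r * ‖f k‖ := mul_comm _ _

lemma sumA (lam x y : ℝ) (hy : |lam * y| < 1) :
    Summable (fun m : ℕ => dff lam x m * y ^ m / (m.factorial : ℝ)) := by
  simpa using sumAux lam x y hy 0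

lemma sumKey (lam x y : ℝ) (hy : |lam * y| < 1) (q : ℕ) :
    Summable (fun m : ℕ => (m.descFactorial q : ℝ) * (dff lam x m * y ^ m / m.factorial)) := by
  rw [← summable_nat_add_iff q]
  apply (sumAux lam x y hy q).congr
  intro k
  have hfact : ((k + q).descFactorial q : ℝ) * (k.factorial : ℝ) = ((k + q).factorial : ℝ) := by
    exact_mod_cast descFact_mul_fact k q
  have hk0 : ((k.factorial : ℝ)) ≠ 0 := by exact_mod_cast k.factorial_ne_zero
  have hkq0 : (((k + q).factorial : ℝ)) ≠ 0 := by exact_mod_cast (k + q).factorial_ne_zero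
  field_simp
  calc dff lam x (k + q) * y ^ (k + q) * ((k + q).factorial : ℝ)
      = ((k + q).descFactorial q : ℝ) * (k.factorial : ℝ) * (dff lam x (k + q) * y ^ (k + q)) := by
        rw [hfact]; ring
    _ = ((k + q).descFactorial q : ℝ) * (dff lam x (k + q) * y ^ (k + q)) * (k.factorial : ℝ) := by
        ring
  ring

lemma tsum_step (lam y : ℝ) (hy : |lam * y| < 1) (x : ℝ) :
    (∑' m : ℕ, dff lam x m * y ^ m / (m.factorial : ℝ)) =
      (1 + lam * y) * ∑' m : ℕ, dff lam (x - lam) m * y ^ m / (m.factorial : ℝ) := by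
  set f : ℕ → ℝ := fun m => dff lam x m * y ^ m / (m.factorial : ℝ) with hfdef
  set g : ℕ → ℝ := fun m => dff lam (x - lam) m * y ^ m / (m.factorial : ℝ) with hgdef
  have S1 : Summable f := sumA lam x y hy
  have S2 : Summable g := sumA lam (x - lam) y hy
  have h1 := S1.hasSum
  have h2 := S2.hasSum
  have h1' := (hasSum_nat_add_iff' (f := f) 1).mpr h1
  have h2' := (hasSum_nat_add_iff' (f := g) 1).mpr h2
  have hdiff := h1'.sub h2'
  have hterm : (fun m : ℕ => f (m + 1) - g (m + 1)) = fun m => lam * y * g m := by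
    funext m
    have hd : dff lam x (m + 1) - dff lam (x - lam) (m + 1)
        = ((m : ℝ) + 1) * lam * dff lam (x - lam) m := by
      have hx1 : dff lam x (m + 1) = x * dff lam (x - lam) m := by
        have := dff_add lam x 1 m
        simp only [Nat.cast_one, one_mul] at this
        rw [show m + 1 = 1 + m from by ring, this]
        simp [dff]
      rw [hx1, dff_succ]
      ring
    have hm0 : ((m.factorial : ℝ)) ≠ 0 := by exact_mod_cast m.factorial_ne_zero
    have hm1 : ((m : ℝ) + 1) ≠ 0 := by positivity
    rw [hfdef, hgdef]
    simp only
    rw [Nat.factorial_succ, pow_succ]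
    push_cast
    rw [show dff lam x (m + 1) * (y ^ m * y) / (((m : ℝ) + 1) * (m.factorial : ℝ)) -
        dff lam (x - lam) (m + 1) * (y ^ m * y) / (((m : ℝ) + 1) * (m.factorial : ℝ))
      = (dff lam x (m + 1) - dff lam (x - lam) (m + 1)) * (y ^ m * y) /
          (((m : ℝ) + 1) * (m.factorial : ℝ)) from by ring, hd]
    field_simp
  rw [hterm] at hdiff
  have hmul := h2.mul_left (lam * y)
  have := hdiff.unique hmul
  have hf0 : ∑ i ∈ Finset.range 1, f i = 1 := by simp [hfdef, dff]
  have hg0 : ∑ i ∈ Finset.range 1, g i = 1 := by simp [hgdef, dff]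
  rw [hf0, hg0] at this
  linear_combination this

lemma tsum_shift (lam y : ℝ) (hy : |lam * y| < 1) (k : ℕ) :
    (∑' m : ℕ, dff lam 1 m * y ^ m / (m.factorial : ℝ)) =
      (1 + lam * y) ^ k *
        ∑' m : ℕ, dff lam (1 - k * lam) m * y ^ m / (m.factorial : ℝ) := by
  induction k with
  | zero => simp
  | succ k ih =>
    have hc : (1 : ℝ) - ((k : ℕ) + 1 : ℕ) * lam = (1 - (k : ℝ) * lam) - lam := by
      push_cast; ring
    rw [ih, tsum_step lam y hy (1 - (k : ℝ) * lam), hc, pow_succ]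
    ring

lemma hasSum_g (p : ℕ) (lam y : ℝ) (hy : |lam * y| < 1) :
    HasSum (fun m : ℕ => (m.descFactorial (p + 1) : ℝ) / (p + 1) *
        (dff lam 1 m * y ^ m / m.factorial))
      (y ^ (p + 1) / (p + 1) * dff lam 1 (p + 1) *
        (1 + lam * y) ^ (-(p + 1 : ℤ)) * dexp lam y) := by
  have hneg : -1 < lam * y := (abs_lt.mp hy).1
  have hne : (1 : ℝ) + lam * y ≠ 0 := by linarith
  have hp1 : ((p : ℝ) + 1) ≠ 0 := by positivity
  set g : ℕ → ℝ := fun m => (m.descFactorial (p + 1) : ℝ) / (p + 1) *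
      (dff lam 1 m * y ^ m / m.factorial) with hgdef
  set x' : ℝ := 1 - ((p : ℝ) + 1) * lam with hx'
  have SA : Summable (fun m : ℕ => dff lam x' m * y ^ m / (m.factorial : ℝ)) :=
    sumA lam x' y hy
  set F : ℝ := ∑' m : ℕ, dff lam x' m * y ^ m / (m.factorial : ℝ) with hF
  have hA : HasSum (fun m : ℕ => dff lam x' m * y ^ m / (m.factorial : ℝ)) F := SA.hasSum
  set C : ℝ := y ^ (p + 1) / (p + 1) * dff lam 1 (p + 1) with hCdef
  have hC := hA.mul_left C
  have hterm : ∀ j : ℕ, C * (dff lam x' j * y ^ j / (j.factorial : ℝ)) = g (j + (p + 1)) := by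
    intro j
    have hsplit : dff lam 1 (j + (p + 1)) = dff lam 1 (p + 1) * dff lam x' j := by
      rw [show j + (p + 1) = (p + 1) + j from by ring, dff_add]
      congr 2
      rw [hx']
      push_cast
      ring
    have hfact : ((j + (p + 1)).descFactorial (p + 1) : ℝ) * (j.factorial : ℝ)
        = ((j + (p + 1)).factorial : ℝ) := by exact_mod_cast descFact_mul_fact j (p + 1)
    have hj0 : ((j.factorial : ℝ)) ≠ 0 := by exact_mod_cast j.factorial_ne_zero
    have hjq0 : (((j + (p + 1)).factorial : ℝ)) ≠ 0 := by
      exact_mod_cast (j + (p + 1)).factorial_ne_zero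
    rw [hgdef]
    simp only
    rw [hsplit, hCdef, pow_add]
    have hdd : (1 : ℝ) / (j.factorial : ℝ)
        = ((j + (p + 1)).descFactorial (p + 1) : ℝ) / ((j + (p + 1)).factorial : ℝ) := by
      rw [div_eq_div_iff hj0 hjq0]
      linarith [hfact]
    rw [show dff lam x' j * y ^ j / (j.factorial : ℝ)
      = dff lam x' j * y ^ j * ((1 : ℝ) / (j.factorial : ℝ)) from by ring, hdd]
    ring
  have hC' : HasSum (fun j : ℕ => g (j + (p + 1))) (C * F) := by
    have heq : (fun j : ℕ => C * (dff lam x' j * y ^ j / (j.factorial : ℝ)))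
        = fun j : ℕ => g (j + (p + 1)) := funext hterm
    rwa [heq] at hC
  have hsum0 : ∑ i ∈ Finset.range (p + 1), g i = 0 := by
    refine Finset.sum_eq_zero fun i hi => ?_
    rw [hgdef]
    simp only
    rw [Nat.descFactorial_eq_zero_iff_lt.mpr (Finset.mem_range.mp hi)]
    simp
  have hgsum : HasSum g (C * F + ∑ i ∈ Finset.range (p + 1), g i) :=
    (hasSum_nat_add_iff (p + 1)).mp hC'
  rw [hsum0, add_zero] at hgsum
  have hshift := tsum_shift lam y hy (p + 1)
  have hx'eq : (1 : ℝ) - ((p + 1 : ℕ) : ℝ) * lam = x' := by rw [hx']; push_cast; ring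
  rw [hx'eq] at hshift
  have hFval : F = dexp lam y * ((1 + lam * y) ^ (p + 1))⁻¹ := by
    have hdexp : dexp lam y = (1 + lam * y) ^ (p + 1) * F := hshift
    rw [hdexp]
    field_simp
  have hzp : (1 + lam * y) ^ (-(p + 1 : ℤ)) = ((1 + lam * y) ^ (p + 1))⁻¹ := by
    rw [zpow_neg, show ((p : ℤ) + 1) = ((p + 1 : ℕ) : ℤ) from by push_cast; ring,
      zpow_natCast]
  have hval : C * F = y ^ (p + 1) / (p + 1) * dff lam 1 (p + 1) *
      (1 + lam * y) ^ (-(p + 1 : ℤ)) * dexp lam y := by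
    rw [hFval, hzp, hCdef]
    ring
  rwa [hval] at hgsum

theorem stmt_7 (p : ℕ) (lam y : ℝ) (hy : |lam * y| < 1) :
    HasSum (fun n : ℕ => (n.descFactorial p : ℝ) * dtail lam y n)
      (y ^ (p + 1) / (p + 1) * dff lam 1 (p + 1) *
        (1 + lam * y) ^ (-(p + 1 : ℤ)) * dexp lam y) := by
  classical
  set a : ℕ → ℝ := fun m => dff lam 1 m * y ^ m / (m.factorial : ℝ) with hadef
  have ha : HasSum a (dexp lam y) := (sumA lam 1 y hy).hasSum
  set G : ℕ × ℕ → ℝ := fun q => if q.2 < q.1 then (q.2.descFactorial p : ℝ) * a q.1 else 0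
    with hGdef
  -- summability of |G|
  have hfib_abs : ∀ m : ℕ, ∀ n ∉ Finset.range m, |G (m, n)| = 0 := by
    intro m n hn
    rw [Finset.mem_range, not_lt] at hn
    simp [hGdef, not_lt.mpr hn]
  have htsum_abs : ∀ m : ℕ, (∑' n : ℕ, |G (m, n)|)
      = (m.descFactorial (p + 1) : ℝ) / (p + 1) * |a m| := by
    intro m
    rw [tsum_eq_sum (hfib_abs m)]
    have : ∀ n ∈ Finset.range m, |G (m, n)| = (n.descFactorial p : ℝ) * |a m| := by
      intro n hn
      rw [Finset.mem_range] at hn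
      rw [hGdef]
      simp only [if_pos hn]
      rw [abs_mul, abs_of_nonneg (by positivity : (0:ℝ) ≤ (n.descFactorial p : ℝ))]
    rw [Finset.sum_congr rfl this, ← Finset.sum_mul, ← Nat.cast_sum]
    have hh : ((∑ n ∈ Finset.range m, n.descFactorial p : ℕ) : ℝ) * ((p : ℝ) + 1)
        = (m.descFactorial (p + 1) : ℝ) := by exact_mod_cast congrArg (Nat.cast : ℕ → ℝ) (hockey p m)
    have hp1 : ((p : ℝ) + 1) ≠ 0 := by positivity
    have hsum : ((∑ n ∈ Finset.range m, n.descFactorial p : ℕ) : ℝ)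
        = (m.descFactorial (p + 1) : ℝ) / ((p : ℝ) + 1) := by
      rw [eq_div_iff hp1]; exact hh
    rw [hsum]
  have habs : Summable fun q : ℕ × ℕ => |G q| := by
    rw [summable_prod_of_nonneg (fun q => abs_nonneg _)]
    constructor
    · intro m
      exact summable_of_ne_finset_zero (hfib_abs m)
    · apply Summable.congr (f := fun m : ℕ => (m.descFactorial (p + 1) : ℝ) / (p + 1) * |a m|)
      · have hk := (sumKey lam 1 y hy (p + 1)).abs
        apply (hk.mul_left (((p : ℝ) + 1))⁻¹).congr
        intro m
        rw [abs_mul, abs_of_nonneg (by positivity : (0:ℝ) ≤ (m.descFactorial (p+1) : ℝ))]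
        ring
      · intro m
        exact (htsum_abs m).symm
  have hGsum : Summable G := Summable.of_norm (by simpa [Real.norm_eq_abs] using habs)
  have hGS : HasSum G (∑' q, G q) := hGsum.hasSum
  -- fibers over m
  have hfibm : ∀ m : ℕ, HasSum (fun n => G (m, n))
      ((m.descFactorial (p + 1) : ℝ) / (p + 1) * a m) := by
    intro m
    have hz : ∀ n ∉ Finset.range m, G (m, n) = 0 := by
      intro n hn
      rw [Finset.mem_range, not_lt] at hn
      simp [hGdef, not_lt.mpr hn]
    have : HasSum (fun n => G (m, n)) _ := hasSum_sum_of_ne_finset_zero hz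
    convert this using 1
    have : ∀ n ∈ Finset.range m, G (m, n) = (n.descFactorial p : ℝ) * a m := by
      intro n hn
      rw [Finset.mem_range] at hn
      simp [hGdef, if_pos hn]
    rw [Finset.sum_congr rfl this, ← Finset.sum_mul, ← Nat.cast_sum]
    have hh : ((∑ n ∈ Finset.range m, n.descFactorial p : ℕ) : ℝ) * ((p : ℝ) + 1)
        = (m.descFactorial (p + 1) : ℝ) := by exact_mod_cast congrArg (Nat.cast : ℕ → ℝ) (hockey p m)
    have hp1 : ((p : ℝ) + 1) ≠ 0 := by positivity
    have hsum : ((∑ n ∈ Finset.range m, n.descFactorial p : ℕ) : ℝ)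
        = (m.descFactorial (p + 1) : ℝ) / ((p : ℝ) + 1) := by
      rw [eq_div_iff hp1]; exact hh
    rw [hsum]
  have hgsum : HasSum (fun m : ℕ => (m.descFactorial (p + 1) : ℝ) / (p + 1) * a m)
      (∑' q, G q) := hGS.prod_fiberwise hfibm
  have hRHS := hasSum_g p lam y hy
  have hval : (∑' q, G q) = y ^ (p + 1) / (p + 1) * dff lam 1 (p + 1) *
      (1 + lam * y) ^ (-(p + 1 : ℤ)) * dexp lam y := hgsum.unique hRHS
  -- fibers over n
  have hfibn : ∀ n : ℕ, HasSum (fun m => G (m, n)) ((n.descFactorial p : ℝ) * dtail lam y n) := by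
    intro n
    have htail : HasSum (fun k => a (k + (n + 1))) (dtail lam y n) := by
      rw [hasSum_nat_add_iff (n + 1)]
      have : dtail lam y n + ∑ i ∈ Finset.range (n + 1), a i = dexp lam y := by
        rw [hadef, dtail]
        ring
      rw [this]
      exact ha
    have h2 := htail.mul_left ((n.descFactorial p : ℝ))
    have hinj : Function.Injective fun k : ℕ => k + (n + 1) := add_left_injective (n + 1)
    refine (Function.Injective.hasSum_iff hinj ?_).mp ?_
    · intro m hm
      have : m < n + 1 := by
        by_contra hc
        exact hm ⟨m - (n + 1), show m - (n + 1) + (n + 1) = m by omega⟩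
      simp [hGdef, show ¬ n < m from by omega]
    · have heq : ((fun m => G (m, n)) ∘ fun k : ℕ => k + (n + 1))
          = fun k : ℕ => (n.descFactorial p : ℝ) * a (k + (n + 1)) := by
        funext k
        simp [hGdef, Function.comp, show n < k + (n + 1) from by omega]
      rw [heq]
      exact h2
  exact hval ▸ ((Equiv.prodComm ℕ ℕ).hasSum_iff.mpr hGS).prod_fiberwise hfibn
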